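/- Let R be a left Artinian ring admitting a finitarily left torsion-free character χ : R → 𝕋 (a character whose kernel contains no nonzero finite left ideal). Then for every nonzero finite left ideal I of R there exists r ∈ R with χ(rI) ≠ {1}; in particular the map soc*(R) → Hom(E, 𝕋) constructed via a surjection h : R → E × U with kernel rad R (E finite semisimple, U semisimple without nontrivial finite left modules) is injective, where a ↦ (the character e ↦ χ(ra) induced on E). -/

import Mathlib

lemma finite_sup_of_finite {R : Type*} [Ring R] (I J : Ideal R)
    (hI : Finite I) (hJ : Finite J) : Finite (I ⊔ J : Ideal R) := by
  have hsurj : Function.Surjective (fun p : I × J => (⟨(p.1 : R) + p.2,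
      Submodule.add_mem_sup p.1.2 p.2.2⟩ : (I ⊔ J : Ideal R))) := by
    rintro ⟨x, hx⟩
    rw [Submodule.mem_sup] at hx
    obtain ⟨y, hy, z, hz, rfl⟩ := hx
    exact ⟨(⟨y, hy⟩, ⟨z, hz⟩), rfl⟩
  exact Finite.of_surjective _ hsurj

lemma finite_finsetSup {R : Type*} [Ring R] (t : Finset (Ideal R))
    (h : ∀ I ∈ t, Finite I) : Finite (t.sup id : Ideal R) := by
  classical
  induction t using Finset.induction_on with
  | empty => simpa using (inferInstance : Finite (⊥ : Ideal R))
  | @insert I s hx ih =>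
      rw [Finset.sup_insert]
      exact finite_sup_of_finite _ _ (h I (Finset.mem_insert_self _ _))
        (ih fun J hJ => h J (Finset.mem_insert_of_mem hJ))

theorem finitarily_torsion_free_character_injective_on_finsocle {R : Type*} [Ring R]
    [IsArtinianRing R] (χ : AddChar R Circle)
    (hχ : ∀ I : Ideal R, Finite I → (∀ x ∈ I, χ x = 1) → I = ⊥) :
    (∀ I : Ideal R, I ≠ ⊥ → Finite I → ∃ r : R, ∃ x ∈ I, χ (r * x) ≠ 1) ∧
    Function.Injective
      (fun a : (sSup {I : Ideal R | IsAtom I ∧ Finite I} : Ideal R) =>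
        fun r : R => χ (r * (a : R))) := by
  constructor
  · intro I hI hfin
    by_contra h
    push_neg at h
    apply hI
    apply hχ I hfin
    intro x hx
    simpa using h 1 x hx
  · intro a b hab
    have hfun : ∀ r : R, χ (r * (a : R)) = χ (r * (b : R)) := fun r =>
      congrFun hab r
    set c : R := (a : R) - (b : R) with hc
    have hcmem : c ∈ sSup {I : Ideal R | IsAtom I ∧ Finite I} :=
      sub_mem a.2 b.2
    have hχc : ∀ r : R, χ (r * c) = 1 := by
      intro r
      have h1 : r * c = r * (a : R) - r * (b : R) := mul_sub r _ _
      rw [h1, AddChar.map_sub_eq_div, hfun r, div_self']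
    -- span {c} is finite
    have hle : Ideal.span {c} ≤ sSup {I : Ideal R | IsAtom I ∧ Finite I} := by
      rw [Ideal.span_le, Set.singleton_subset_iff]; exact hcmem
    have hcompact : IsCompactElement (Ideal.span {c}) :=
      Submodule.fg_iff_compact _ |>.mp (Submodule.fg_span_singleton c)
    obtain ⟨t, hts, hlet⟩ :=
      (CompleteLattice.isCompactElement_iff_exists_le_sSup_of_le_sSup _ _).mp hcompact _ hle
    have hfin : Finite (Ideal.span {c} : Ideal R) := by
      have hfsup : Finite (t.sup id : Ideal R) :=
        finite_finsetSup t fun I hI => (hts hI).2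
      exact Finite.of_injective (Submodule.inclusion hlet)
        (Submodule.inclusion_injective hlet)
    have hbot : Ideal.span {c} = ⊥ := by
      apply hχ _ hfin
      intro x hx
      rw [Ideal.mem_span_singleton'] at hx
      obtain ⟨r, rfl⟩ := hx
      exact hχc r
    have : c = 0 := by
      have := Ideal.mem_span_singleton_self c
      rw [hbot] at this
      simpa using this
    ext
    exact sub_eq_zero.mp this
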